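/- arXiv:1103.0672 — 5 statements merged into one kernel-verified Lean document; each statement's English description precedes it below -/
import Mathlib

section
/- Let E be a finite-dimensional real vector space, C a subspace of E, and W a subspace complementary to C (i.e. W ∩ C = {0} and W + C = E). Let L be a lagrangian subspace of (Module.Dual ℝ E) × E with respect to the canonical symplectic form ω, and assume {0} × C ⊆ L. Then the following are equivalent: (i) L ∩ ({0} × E) = {0} × C (cleanness); (ii) L ∩ (W⁰ × W) = {0}; (iii) L + (W⁰ × W) = (Module.Dual ℝ E) × E (transversality to the lagrangian subspace Λ^W = W⁰ × W). -/
open Module FiniteDimensional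

/-- A product submodule is linearly equivalent to the product of its factors. -/
def prodSubEquivAux {R M N : Type*} [CommRing R] [AddCommGroup M] [AddCommGroup N]
    [Module R M] [Module R N] (p : Submodule R M) (q : Submodule R N) :
    (p.prod q) ≃ₗ[R] p × q where
  toFun x := (⟨x.1.1, x.2.1⟩, ⟨x.1.2, x.2.2⟩)
  invFun x := ⟨(x.1.1, x.2.1), ⟨x.1.2, x.2.2⟩⟩
  map_add' x y := rfl
  map_smul' r x := rfl
  left_inv x := rfl
  right_inv x := rfl

lemma finrank_prod_sub {R M N : Type*} [Field R] [AddCommGroup M] [AddCommGroup N]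
    [Module R M] [Module R N] (p : Submodule R M) (q : Submodule R N)
    [FiniteDimensional R p] [FiniteDimensional R q] :
    finrank R (p.prod q) = finrank R p + finrank R q := by
  rw [LinearEquiv.finrank_eq (prodSubEquivAux p q), Module.finrank_prod]

/-- Equivalence theorem (pointwise linear content): for a lagrangian subspace `L` of
`(Module.Dual ℝ E) × E` containing `{0} × C`, with `W` complementary to `C`,
cleanness `L ∩ ({0} × E) = {0} × C` is equivalent to `L ∩ (W⁰ × W) = {0}` and to
`L + (W⁰ × W) = (Module.Dual ℝ E) × E`. -/
theorem clean_iff_transverse_iff_sum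
    (E : Type*) [AddCommGroup E] [Module ℝ E] [FiniteDimensional ℝ E]
    (C W : Submodule ℝ E) (hdisj : W ⊓ C = ⊥) (hspan : W ⊔ C = ⊤)
    (L : Submodule ℝ (Module.Dual ℝ E × E))
    (hLag : ∀ u : Module.Dual ℝ E × E,
      u ∈ L ↔ ∀ l ∈ L, u.1 l.2 - l.1 u.2 = 0)
    (hcore : (⊥ : Submodule ℝ (Module.Dual ℝ E)).prod C ≤ L) :
    (L ⊓ (⊥ : Submodule ℝ (Module.Dual ℝ E)).prod (⊤ : Submodule ℝ E)
        = (⊥ : Submodule ℝ (Module.Dual ℝ E)).prod C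
      ↔ L ⊓ W.dualAnnihilator.prod W = ⊥)
    ∧ (L ⊓ W.dualAnnihilator.prod W = ⊥
      ↔ L ⊔ W.dualAnnihilator.prod W = ⊤) := by
  set F := Module.Dual ℝ E × E
  set Λ := W.dualAnnihilator.prod W with hΛ
  -- the first equivalence
  have iff1 : L ⊓ (⊥ : Submodule ℝ (Module.Dual ℝ E)).prod (⊤ : Submodule ℝ E)
      = (⊥ : Submodule ℝ (Module.Dual ℝ E)).prod C ↔ L ⊓ Λ = ⊥ := by
    constructor
    · intro hclean
      rw [eq_bot_iff]
      rintro u ⟨huL, hu1, hu2⟩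
      -- u.1 vanishes on W and on C, hence u.1 = 0
      have hC : ∀ c ∈ C, u.1 c = 0 := by
        intro c hc
        have hl : ((0 : Module.Dual ℝ E), c) ∈ L :=
          hcore ⟨Submodule.mem_bot ℝ |>.mpr rfl, hc⟩
        have := (hLag u).mp huL _ hl
        simpa using this
      have hu1z : u.1 = 0 := by
        ext x
        have hx : x ∈ W ⊔ C := hspan ▸ Submodule.mem_top
        rcases Submodule.mem_sup.mp hx with ⟨w, hw, c, hc, rfl⟩
        have h1 : u.1 w = 0 := (Submodule.mem_dualAnnihilator u.1).mp hu1 w hw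
        simp [h1, hC c hc]
      have : u ∈ (⊥ : Submodule ℝ (Module.Dual ℝ E)).prod C := by
        rw [← hclean]
        exact ⟨huL, by simp [hu1z], Submodule.mem_top⟩
      have hu2C : u.2 ∈ C := this.2
      have hu2z : u.2 = 0 := by
        have : u.2 ∈ W ⊓ C := ⟨hu2, hu2C⟩
        rwa [hdisj, Submodule.mem_bot] at this
      simp [Submodule.mem_bot, Prod.ext_iff, hu1z, hu2z]
    · intro hinf
      apply le_antisymm
      · rintro u ⟨huL, hu1, -⟩
        have hu1z : u.1 = 0 := by simpa using hu1
        have hx : u.2 ∈ W ⊔ C := hspan ▸ Submodule.mem_top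
        rcases Submodule.mem_sup.mp hx with ⟨w, hw, c, hc, hwc⟩
        have hlc : ((0 : Module.Dual ℝ E), c) ∈ L :=
          hcore ⟨Submodule.mem_bot ℝ |>.mpr rfl, hc⟩
        have hsub : u - (0, c) ∈ L := Submodule.sub_mem L huL hlc
        have hmem : u - (0, c) ∈ L ⊓ Λ := by
          refine ⟨hsub, ?_, ?_⟩
          · show u.1 - 0 ∈ W.dualAnnihilator
            simp [hu1z]
          · show u.2 - c ∈ W
            have : u.2 - c = w := by rw [← hwc]; abel
            rwa [this]
        rw [hinf, Submodule.mem_bot] at hmem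
        have hc2 : u.2 = c := by
          have := congrArg Prod.snd hmem
          simpa [sub_eq_zero] using this
        exact ⟨by simpa using hu1z, by rw [hc2]; exact hc⟩
      · intro u hu
        refine ⟨hcore hu, by simpa using hu.1, Submodule.mem_top⟩
  refine ⟨iff1, ?_⟩
  -- dimension facts
  have hFrank : finrank ℝ F = 2 * finrank ℝ E := by
    rw [Module.finrank_prod, Subspace.dual_finrank_eq, two_mul]
  -- the map u ↦ ω(u, ·)
  let φ : F →ₗ[ℝ] Module.Dual ℝ F :=
    { toFun := fun u =>
        { toFun := fun l => u.1 l.2 - l.1 u.2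
          map_add' := by
            intro a b
            show u.1 (a.2 + b.2) - (a.1 + b.1) u.2 = _
            simp only [map_add, LinearMap.add_apply]
            ring
          map_smul' := by
            intro r a
            show u.1 (r • a.2) - (r • a.1) u.2 = _
            simp only [map_smul, LinearMap.smul_apply, smul_eq_mul, RingHom.id_apply]
            ring }
      map_add' := by
        intro a b
        apply LinearMap.ext
        intro l
        show (a.1 + b.1) l.2 - l.1 (a.2 + b.2) = _
        simp only [map_add, LinearMap.add_apply, LinearMap.coe_mk, AddHom.coe_mk]
        ring
      map_smul' := by
        intro r a
        apply LinearMap.ext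
        intro l
        show (r • a.1) l.2 - l.1 (r • a.2) = _
        simp only [map_smul, LinearMap.smul_apply, smul_eq_mul, RingHom.id_apply,
          LinearMap.coe_mk, AddHom.coe_mk]
        ring }
  have hφinj : Function.Injective φ := by
    rw [← LinearMap.ker_eq_bot]
    apply LinearMap.ker_eq_bot'.mpr
    intro u hu
    have h : ∀ l : F, u.1 l.2 - l.1 u.2 = 0 := by
      intro l
      have := DFunLike.congr_fun hu l
      simpa [φ] using this
    have h1 : u.1 = 0 := by
      ext w
      simpa using h ((0 : Module.Dual ℝ E), w)
    have h2 : u.2 = 0 := by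
      rw [← Module.forall_dual_apply_eq_zero_iff ℝ u.2]
      intro q
      have := h (q, 0)
      simp only [map_zero] at this
      linarith [this]
    exact Prod.ext h1 h2
  have hφsurj : Function.Surjective φ :=
    (LinearMap.injective_iff_surjective_of_finrank_eq_finrank
      (by rw [Subspace.dual_finrank_eq])).mp hφinj
  let e : F ≃ₗ[ℝ] Module.Dual ℝ F := LinearEquiv.ofBijective φ ⟨hφinj, hφsurj⟩
  have hLcomap : L = Submodule.comap (e : F →ₗ[ℝ] Module.Dual ℝ F) L.dualAnnihilator := by
    ext u
    rw [Submodule.mem_comap, Submodule.mem_dualAnnihilator, hLag u]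
    constructor
    · intro h l hl; exact h l hl
    · intro h l hl; exact h l hl
  have hLrank : finrank ℝ L = finrank ℝ E := by
    have h1 : finrank ℝ L = finrank ℝ L.dualAnnihilator := by
      conv_lhs => rw [hLcomap]
      rw [Submodule.comap_equiv_eq_map_symm]
      exact LinearEquiv.finrank_map_eq _ _
    have h2 : finrank ℝ (F ⧸ L) + finrank ℝ L = finrank ℝ F :=
      Submodule.finrank_quotient_add_finrank L
    have h3 : finrank ℝ (F ⧸ L) = finrank ℝ L.dualAnnihilator :=
      LinearEquiv.finrank_eq (Subspace.quotEquivAnnihilator L)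
    omega
  have hΛrank : finrank ℝ Λ = finrank ℝ E := by
    rw [hΛ, finrank_prod_sub]
    have h2 : finrank ℝ (E ⧸ W) + finrank ℝ W = finrank ℝ E :=
      Submodule.finrank_quotient_add_finrank W
    have h3 : finrank ℝ (E ⧸ W) = finrank ℝ W.dualAnnihilator :=
      LinearEquiv.finrank_eq (Subspace.quotEquivAnnihilator W)
    omega
  have hsum : finrank ℝ (L ⊔ Λ : Submodule ℝ F) + finrank ℝ (L ⊓ Λ : Submodule ℝ F)
      = finrank ℝ L + finrank ℝ Λ := Submodule.finrank_sup_add_finrank_inf_eq L Λ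
  constructor
  · intro hinf
    rw [hinf, finrank_bot, add_zero, hLrank, hΛrank] at hsum
    exact Submodule.eq_top_of_finrank_eq (by
      rw [hsum, show finrank ℝ (Module.Dual ℝ E × E) = 2 * finrank ℝ E from hFrank]; ring)
  · intro hsup
    rw [hsup, finrank_top, hLrank, hΛrank] at hsum
    rw [show finrank ℝ (Module.Dual ℝ E × E) = 2 * finrank ℝ E from hFrank] at hsum
    have : finrank ℝ (L ⊓ Λ : Submodule ℝ F) = 0 := by omega
    exact Submodule.finrank_eq_zero.mp this
end

section
/- Let E be a finite-dimensional real vector space and L a lagrangian subspace of (Module.Dual ℝ E) × E with respect to the canonical symplectic form ω. If L ∩ ((Module.Dual ℝ E) × {0}) = {0}, then there exists a unique linear map A : E → Module.Dual ℝ E such that L = {(A v, v) : v ∈ E}, and this A is symmetric: (A v)(w) = (A w)(v) for all v, w ∈ E. -/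
/-- A lagrangian subspace `L` of `(Module.Dual ℝ E) × E` (for the canonical symplectic form)
that meets the vertical subspace `(Dual ℝ E) × {0}` trivially is the graph
`{(A v, v) : v ∈ E}` of a unique linear map `A : E → Dual ℝ E`, and this `A` is symmetric. -/
theorem projectable_lagrangian_is_symmetric_graph
    (E : Type*) [AddCommGroup E] [Module ℝ E] [FiniteDimensional ℝ E]
    (L : Submodule ℝ (Module.Dual ℝ E × E))
    (hLag : ∀ u : Module.Dual ℝ E × E,
      u ∈ L ↔ ∀ l ∈ L, u.1 l.2 - l.1 u.2 = 0)
    (hproj : L ⊓ (⊤ : Submodule ℝ (Module.Dual ℝ E)).prod (⊥ : Submodule ℝ E) = ⊥) :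
    (∃! A : E →ₗ[ℝ] Module.Dual ℝ E,
        L = LinearMap.range (A.prod (LinearMap.id : E →ₗ[ℝ] E)))
    ∧ (∀ A : E →ₗ[ℝ] Module.Dual ℝ E,
        L = LinearMap.range (A.prod (LinearMap.id : E →ₗ[ℝ] E)) →
        ∀ v w : E, A v w = A w v) := by
  -- "vertical vectors in L are zero"
  have hvert : ∀ x : Module.Dual ℝ E × E, x ∈ L → x.2 = 0 → x = 0 := by
    intro x hx h2
    have : x ∈ L ⊓ (⊤ : Submodule ℝ (Module.Dual ℝ E)).prod (⊥ : Submodule ℝ E) := by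
      refine ⟨hx, ?_⟩
      exact ⟨trivial, h2⟩
    rw [hproj] at this
    exact this
  -- projection of L to E is all of E
  set f : L →ₗ[ℝ] E := (LinearMap.snd ℝ (Module.Dual ℝ E) E).comp L.subtype with hf
  have hinj : Function.Injective f := by
    intro x y hxy
    have h2 : (x : Module.Dual ℝ E × E).2 = (y : Module.Dual ℝ E × E).2 := hxy
    have hz := hvert ((x : Module.Dual ℝ E × E) - y) (L.sub_mem x.2 y.2) (by simp [h2])
    exact Subtype.ext (sub_eq_zero.mp hz)
  have hsurj : Function.Surjective f := by
    rw [← LinearMap.range_eq_top]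
    have hP : LinearMap.range f = Submodule.map (LinearMap.snd ℝ (Module.Dual ℝ E) E) L := by
      rw [hf, LinearMap.range_comp, Submodule.range_subtype]
    rw [hP]
    rw [← Subspace.dualAnnihilator_inj, Submodule.dualAnnihilator_top]
    rw [eq_bot_iff]
    intro p hp
    simp only [Submodule.mem_dualAnnihilator, Submodule.mem_map] at hp
    have hpL : (p, (0 : E)) ∈ L := by
      rw [hLag]
      intro l hl
      simp only [sub_eq_zero]
      rw [hp l.2 ⟨l, hl, rfl⟩]
      simp
    have := hvert (p, 0) hpL rfl
    simpa using congrArg Prod.fst this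
  let e : L ≃ₗ[ℝ] E := LinearEquiv.ofBijective f ⟨hinj, hsurj⟩
  let A : E →ₗ[ℝ] Module.Dual ℝ E :=
    ((LinearMap.fst ℝ (Module.Dual ℝ E) E).comp L.subtype).comp (e.symm : E →ₗ[ℝ] L)
  have hA2 : ∀ v : E, ((e.symm v : L) : Module.Dual ℝ E × E).2 = v := by
    intro v
    exact e.apply_symm_apply v
  have hAmem : ∀ v : E, (A v, v) ∈ L := by
    intro v
    have h := (e.symm v).2
    have h2 := hA2 v
    have : ((e.symm v : L) : Module.Dual ℝ E × E) = (A v, v) := by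
      ext
      · rfl
      · exact h2
    rwa [this] at h
  have hrange : L = LinearMap.range (A.prod (LinearMap.id : E →ₗ[ℝ] E)) := by
    ext x
    constructor
    · intro hx
      refine ⟨x.2, ?_⟩
      have hdiff : (A x.2, x.2) - x ∈ L := L.sub_mem (hAmem x.2) hx
      have hz := hvert _ hdiff (by simp)
      have h1 : A x.2 - x.1 = 0 := congrArg Prod.fst hz
      have h2 : A x.2 = x.1 := sub_eq_zero.mp h1
      exact Prod.ext h2 rfl
    · rintro ⟨v, rfl⟩
      exact hAmem v
  -- uniqueness helper
  have huniq : ∀ B : E →ₗ[ℝ] Module.Dual ℝ E,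
      L = LinearMap.range (B.prod (LinearMap.id : E →ₗ[ℝ] E)) →
      ∀ v, (B v, v) ∈ L := by
    intro B hB v
    rw [hB]
    exact ⟨v, rfl⟩
  constructor
  · refine ⟨A, hrange, ?_⟩
    intro B hB
    ext v w
    have h1 : (B v, v) ∈ L := huniq B hB v
    have h2 : (A v, v) ∈ L := hAmem v
    have hdiff : (B v, v) - (A v, v) ∈ L := L.sub_mem h1 h2
    have := hvert _ hdiff (by simp)
    have h3 := congrArg Prod.fst this
    simp only [Prod.fst_sub] at h3
    have := sub_eq_zero.mp h3
    rw [this]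
  · intro B hB v w
    have h1 : (B v, v) ∈ L := huniq B hB v
    have h2 : (B w, w) ∈ L := huniq B hB w
    have := (hLag (B v, v)).mp h1 (B w, w) h2
    simpa [sub_eq_zero] using this
end

section
/- Let E₁, E₂, E₃ be Euclidean spaces ℝ^k, ℝ^l, ℝ^m, and let F : E₁ × E₂ → ℝ and G : E₂ × E₃ → ℝ be smooth functions such that ∇₂F(0, x₂) = 0 for all x₂ ∈ E₂. Set ψ(x₃) := ∇₁G(0, x₃). Then for every x₃⁰ ∈ E₃ there exist an open neighborhood U of (0, x₃⁰) in E₁ × E₃, an open neighborhood V of (0, ψ(x₃⁰)) in E₂ × E₂, and a smooth map σ : U → E₂ × E₂ such that, writing σ(p₁,x₃) = (p̄₂(p₁,x₃), x̄₂(p₁,x₃)), for every (p₁,x₃) ∈ U the pair σ(p₁,x₃) lies in V, satisfies p̄₂ = ∇₂F(p₁, x̄₂) and x̄₂ = ∇₁G(p̄₂, x₃), and is the unique element of V satisfying this pair of equations. -/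
open InnerProductSpace Set ContinuousLinearMap

noncomputable section

section Aux
variable {k l m : ℕ}
local notation "E₁" => EuclideanSpace ℝ (Fin k)
local notation "E₂" => EuclideanSpace ℝ (Fin l)
local notation "E₃" => EuclideanSpace ℝ (Fin m)

private lemma contDiff_grad_right' (F : EuclideanSpace ℝ (Fin k) × EuclideanSpace ℝ (Fin l) → ℝ)
    (hF : ContDiff ℝ (⊤ : ℕ∞) F) :
    ContDiff ℝ (⊤ : ℕ∞) (fun q : EuclideanSpace ℝ (Fin k) × EuclideanSpace ℝ (Fin l) =>
      gradient (fun y => F (q.1, y)) q.2) := by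
  have hd : ContDiff ℝ (⊤ : ℕ∞) (fderiv ℝ F) := hF.fderiv_right (by simp)
  set T : ((E₁ × E₂) →L[ℝ] ℝ) →L[ℝ] (E₂ →L[ℝ] ℝ) :=
    (ContinuousLinearMap.compL ℝ E₂ (E₁ × E₂) ℝ).flip (ContinuousLinearMap.inr ℝ E₁ E₂) with hT
  set J := (toDual ℝ E₂).symm.toContinuousLinearEquiv with hJ
  have heq : (fun q : E₁ × E₂ => gradient (fun y => F (q.1, y)) q.2)
      = fun q => J.toContinuousLinearMap (T (fderiv ℝ F q)) := by
    funext q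
    show (toDual ℝ E₂).symm (fderiv ℝ (fun y => F (q.1, y)) q.2) = _
    have hfn : (fun y => F (q.1, y)) = F ∘ Prod.mk q.1 := rfl
    rw [hfn, ((hF.differentiable (by simp) (q.1, q.2)).hasFDerivAt.comp q.2
      (hasFDerivAt_prodMk_right q.1 q.2)).fderiv]
    rfl
  rw [heq]
  exact J.toContinuousLinearMap.contDiff.comp (T.contDiff.comp hd)

private lemma contDiff_grad_left' (G : EuclideanSpace ℝ (Fin l) × EuclideanSpace ℝ (Fin m) → ℝ)
    (hG : ContDiff ℝ (⊤ : ℕ∞) G) :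
    ContDiff ℝ (⊤ : ℕ∞) (fun q : EuclideanSpace ℝ (Fin l) × EuclideanSpace ℝ (Fin m) =>
      gradient (fun p => G (p, q.2)) q.1) := by
  have hd : ContDiff ℝ (⊤ : ℕ∞) (fderiv ℝ G) := hG.fderiv_right (by simp)
  set T : ((E₂ × E₃) →L[ℝ] ℝ) →L[ℝ] (E₂ →L[ℝ] ℝ) :=
    (ContinuousLinearMap.compL ℝ E₂ (E₂ × E₃) ℝ).flip (ContinuousLinearMap.inl ℝ E₂ E₃) with hT
  set J := (toDual ℝ E₂).symm.toContinuousLinearEquiv with hJ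
  have heq : (fun q : E₂ × E₃ => gradient (fun p => G (p, q.2)) q.1)
      = fun q => J.toContinuousLinearMap (T (fderiv ℝ G q)) := by
    funext q
    show (toDual ℝ E₂).symm (fderiv ℝ (fun p => G (p, q.2)) q.1) = _
    have hfn : (fun p => G (p, q.2)) = G ∘ (fun p => (p, q.2)) := rfl
    rw [hfn, ((hG.differentiable (by simp) (q.1, q.2)).hasFDerivAt.comp q.1
      (hasFDerivAt_prodMk_left q.1 q.2)).fderiv]
    rfl
  rw [heq]
  exact J.toContinuousLinearMap.contDiff.comp (T.contDiff.comp hd)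

end Aux

/-- Unique local solution of the system `p̄₂ = ∇₂F(p₁, x̄₂)`, `x̄₂ = ∇₁G(p̄₂, x₃)` for
generating functions `F`, `G` with `∇₂F(0,·) = 0`, near `p₁ = 0` (implicit function theorem
lemma underlying the monicity of composition of symplectic micromorphisms). -/
theorem implicit_solution_of_generating_system (k l m : ℕ)
    (F : EuclideanSpace ℝ (Fin k) × EuclideanSpace ℝ (Fin l) → ℝ)
    (G : EuclideanSpace ℝ (Fin l) × EuclideanSpace ℝ (Fin m) → ℝ)
    (hF : ContDiff ℝ (⊤ : ℕ∞) F) (hG : ContDiff ℝ (⊤ : ℕ∞) G)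
    (hFcrit : ∀ x₂ : EuclideanSpace ℝ (Fin l),
      gradient (fun y => F (0, y)) x₂ = 0) :
    ∀ x₃0 : EuclideanSpace ℝ (Fin m),
      ∃ U : Set (EuclideanSpace ℝ (Fin k) × EuclideanSpace ℝ (Fin m)),
        IsOpen U ∧ (0, x₃0) ∈ U ∧
      ∃ V : Set (EuclideanSpace ℝ (Fin l) × EuclideanSpace ℝ (Fin l)),
        IsOpen V ∧ (0, gradient (fun p₂ => G (p₂, x₃0)) 0) ∈ V ∧
      ∃ σ : EuclideanSpace ℝ (Fin k) × EuclideanSpace ℝ (Fin m) →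
            EuclideanSpace ℝ (Fin l) × EuclideanSpace ℝ (Fin l),
        ContDiffOn ℝ (⊤ : ℕ∞) σ U ∧
        ∀ z ∈ U,
          σ z ∈ V ∧
          (σ z).1 = gradient (fun y => F (z.1, y)) (σ z).2 ∧
          (σ z).2 = gradient (fun p₂ => G (p₂, z.2)) (σ z).1 ∧
          ∀ w ∈ V,
            (w.1 = gradient (fun y => F (z.1, y)) w.2 ∧
             w.2 = gradient (fun p₂ => G (p₂, z.2)) w.1) → w = σ z := by
  classical
  intro x₃0
  set gFm : EuclideanSpace ℝ (Fin k) × EuclideanSpace ℝ (Fin l) → EuclideanSpace ℝ (Fin l) :=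
    fun q => gradient (fun y => F (q.1, y)) q.2 with hgFmdef
  set gGm : EuclideanSpace ℝ (Fin l) × EuclideanSpace ℝ (Fin m) → EuclideanSpace ℝ (Fin l) :=
    fun q => gradient (fun p => G (p, q.2)) q.1 with hgGmdef
  have hgF : ContDiff ℝ (⊤ : ℕ∞) gFm := contDiff_grad_right' F hF
  have hgG : ContDiff ℝ (⊤ : ℕ∞) gGm := contDiff_grad_left' G hG
  have hgF0 : ∀ x : EuclideanSpace ℝ (Fin l), gFm (0, x) = 0 := fun x => hFcrit x
  -- the "big" map
  set Φ : (EuclideanSpace ℝ (Fin k) × EuclideanSpace ℝ (Fin m)) ×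
          (EuclideanSpace ℝ (Fin l) × EuclideanSpace ℝ (Fin l)) →
          (EuclideanSpace ℝ (Fin k) × EuclideanSpace ℝ (Fin m)) ×
          (EuclideanSpace ℝ (Fin l) × EuclideanSpace ℝ (Fin l)) :=
    fun x => (x.1, (x.2.1 - gFm (x.1.1, x.2.2), x.2.2 - gGm (x.2.1, x.1.2))) with hΦdef
  have hΦ : ContDiff ℝ (⊤ : ℕ∞) Φ := by
    apply ContDiff.prodMk contDiff_fst
    apply ContDiff.prodMk
    · exact (contDiff_fst.comp contDiff_snd).sub
        (hgF.comp ((contDiff_fst.comp contDiff_fst).prodMk (contDiff_snd.comp contDiff_snd)))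
    · exact (contDiff_snd.comp contDiff_snd).sub
        (hgG.comp ((contDiff_fst.comp contDiff_snd).prodMk (contDiff_snd.comp contDiff_fst)))
  -- base point
  set a : (EuclideanSpace ℝ (Fin k) × EuclideanSpace ℝ (Fin m)) ×
          (EuclideanSpace ℝ (Fin l) × EuclideanSpace ℝ (Fin l)) :=
    ((0, x₃0), (0, gGm (0, x₃0))) with hadef
  -- partial derivatives at the base point
  set A := fderiv ℝ gFm ((0 : EuclideanSpace ℝ (Fin k)), gGm (0, x₃0)) with hAdef
  set B := fderiv ℝ gGm ((0 : EuclideanSpace ℝ (Fin l)), x₃0) with hBdef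
  -- structural continuous linear maps
  set pZ := ContinuousLinearMap.fst ℝ (EuclideanSpace ℝ (Fin k) × EuclideanSpace ℝ (Fin m))
      (EuclideanSpace ℝ (Fin l) × EuclideanSpace ℝ (Fin l)) with hpZ
  set pP := ContinuousLinearMap.snd ℝ (EuclideanSpace ℝ (Fin k) × EuclideanSpace ℝ (Fin m))
      (EuclideanSpace ℝ (Fin l) × EuclideanSpace ℝ (Fin l)) with hpP
  set q1 := (ContinuousLinearMap.fst ℝ (EuclideanSpace ℝ (Fin l))
      (EuclideanSpace ℝ (Fin l))).comp pP with hq1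
  set q2 := (ContinuousLinearMap.snd ℝ (EuclideanSpace ℝ (Fin l))
      (EuclideanSpace ℝ (Fin l))).comp pP with hq2
  set r1 := (ContinuousLinearMap.fst ℝ (EuclideanSpace ℝ (Fin k))
      (EuclideanSpace ℝ (Fin m))).comp pZ with hr1
  set r2 := (ContinuousLinearMap.snd ℝ (EuclideanSpace ℝ (Fin k))
      (EuclideanSpace ℝ (Fin m))).comp pZ with hr2
  set L := pZ.prod ((q1 - A.comp (r1.prod q2)).prod (q2 - B.comp (q1.prod r2))) with hLdef
  have hgF' : HasFDerivAt gFm A ((0 : EuclideanSpace ℝ (Fin k)), gGm (0, x₃0)) :=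
    (hgF.differentiable (by simp) _).hasFDerivAt
  have hgG' : HasFDerivAt gGm B ((0 : EuclideanSpace ℝ (Fin l)), x₃0) :=
    (hgG.differentiable (by simp) _).hasFDerivAt
  have hL : HasFDerivAt Φ L a := by
    have h1 : HasFDerivAt (fun x : (EuclideanSpace ℝ (Fin k) × EuclideanSpace ℝ (Fin m)) ×
        (EuclideanSpace ℝ (Fin l) × EuclideanSpace ℝ (Fin l)) => gFm (x.1.1, x.2.2))
        (A.comp (r1.prod q2)) a :=
      (hgF'.comp a ((r1.prod q2).hasFDerivAt) :)
    have h2 : HasFDerivAt (fun x : (EuclideanSpace ℝ (Fin k) × EuclideanSpace ℝ (Fin m)) ×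
        (EuclideanSpace ℝ (Fin l) × EuclideanSpace ℝ (Fin l)) => gGm (x.2.1, x.1.2))
        (B.comp (q1.prod r2)) a :=
      (hgG'.comp a ((q1.prod r2).hasFDerivAt) :)
    exact pZ.hasFDerivAt.prodMk ((q1.hasFDerivAt.sub h1).prodMk (q2.hasFDerivAt.sub h2))
  have hA0 : A.comp (ContinuousLinearMap.inr ℝ (EuclideanSpace ℝ (Fin k))
      (EuclideanSpace ℝ (Fin l))) = 0 := by
    have hc : HasFDerivAt (fun v : EuclideanSpace ℝ (Fin l) =>
        gFm ((0 : EuclideanSpace ℝ (Fin k)), v))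
        (A.comp (ContinuousLinearMap.inr ℝ (EuclideanSpace ℝ (Fin k))
          (EuclideanSpace ℝ (Fin l)))) (gGm (0, x₃0)) :=
      hgF'.comp _ (hasFDerivAt_prodMk_right _ _)
    have hzero : (fun v : EuclideanSpace ℝ (Fin l) =>
        gFm ((0 : EuclideanSpace ℝ (Fin k)), v)) = fun _ => (0 : EuclideanSpace ℝ (Fin l)) :=
      funext fun v => hgF0 v
    rw [hzero] at hc
    exact hc.unique (hasFDerivAt_const 0 _)
  have hA0' : ∀ v : EuclideanSpace ℝ (Fin l), A (0, v) = 0 := by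
    intro v
    have : A (0, v) = (A.comp (ContinuousLinearMap.inr ℝ (EuclideanSpace ℝ (Fin k))
        (EuclideanSpace ℝ (Fin l)))) v := rfl
    rw [this, hA0]; rfl
  have hinj : Function.Injective L := by
    rw [injective_iff_map_eq_zero]
    intro x hx
    have h1 : x.1 = 0 := congrArg Prod.fst hx
    have h11 : x.1.1 = 0 := congrArg Prod.fst h1
    have h12 : x.1.2 = 0 := congrArg Prod.snd h1
    have h2 : x.2.1 - A (x.1.1, x.2.2) = 0 := congrArg (fun w => w.2.1) hx
    rw [h11, hA0' x.2.2, sub_zero] at h2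
    have h3 : x.2.2 - B (x.2.1, x.1.2) = 0 := congrArg (fun w => w.2.2) hx
    rw [h2, h12] at h3
    have hB0 : B ((0 : EuclideanSpace ℝ (Fin l)), (0 : EuclideanSpace ℝ (Fin m))) = 0 :=
      map_zero B
    rw [hB0, sub_zero] at h3
    have hxeta : x = ((x.1.1, x.1.2), (x.2.1, x.2.2)) := rfl
    rw [hxeta, h11, h12, h2, h3]
    rfl
  have hdet : L.det ≠ 0 := by
    have hsurj : Function.Surjective L :=
      ((LinearMap.injective_iff_surjective
        (f := L.toLinearMap)).mp hinj :)
    have hbij : Function.Bijective L.toLinearMap := ⟨hinj, hsurj⟩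
    exact (LinearEquiv.ofBijective L.toLinearMap hbij).isUnit_det'.ne_zero
  -- the open set where the derivative of Φ is invertible
  set S := {x : (EuclideanSpace ℝ (Fin k) × EuclideanSpace ℝ (Fin m)) ×
      (EuclideanSpace ℝ (Fin l) × EuclideanSpace ℝ (Fin l)) |
      (fderiv ℝ Φ x).det ≠ 0} with hSdef
  have hDc : Continuous fun x : (EuclideanSpace ℝ (Fin k) × EuclideanSpace ℝ (Fin m)) ×
      (EuclideanSpace ℝ (Fin l) × EuclideanSpace ℝ (Fin l)) => (fderiv ℝ Φ x).det :=
    ContinuousLinearMap.continuous_det.comp (hΦ.fderiv_right (m := (⊤:ℕ∞)) (by simp)).continuous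
  have hSo : IsOpen S := isOpen_ne.preimage hDc
  have hfda : fderiv ℝ Φ a = L := hL.fderiv
  have haS : a ∈ S := by
    show (fderiv ℝ Φ a).det ≠ 0
    rw [hfda]; exact hdet
  have hdiffΦ : Differentiable ℝ Φ := hΦ.differentiable (by simp)
  -- derivative equivalences at points of S
  have hFD : ∀ x, ∀ hx : x ∈ S, HasFDerivAt Φ
      (((fderiv ℝ Φ x).toContinuousLinearEquivOfDetNeZero hx :
        _ ≃L[ℝ] _) : _ →L[ℝ] _) x := by
    intro x hx
    rw [ContinuousLinearMap.coe_toContinuousLinearEquivOfDetNeZero]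
    exact (hdiffΦ x).hasFDerivAt
  have h1n : ((⊤ : ℕ∞) : WithTop ℕ∞) ≠ 0 := by simp
  -- the partial homeomorphism given by the inverse function theorem
  set P := hΦ.contDiffAt.toOpenPartialHomeomorph Φ (hFD a haS) h1n with hPdef
  have hPcoe : (P : _ → _) = Φ := rfl
  have haP : a ∈ P.source :=
    hΦ.contDiffAt.mem_toOpenPartialHomeomorph_source (hFD a haS) h1n
  have hΦaP : Φ a ∈ P.target :=
    hΦ.contDiffAt.image_mem_toOpenPartialHomeomorph_target (hFD a haS) h1n
  have hΦa : Φ a = ((0, x₃0), 0) := by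
    show (a.1, (a.2.1 - gFm (a.1.1, a.2.2), a.2.2 - gGm (a.2.1, a.1.2))) = ((0, x₃0), 0)
    have e1 : a.2.1 - gFm (a.1.1, a.2.2) = 0 := by
      show (0 : EuclideanSpace ℝ (Fin l)) - gFm (0, gGm (0, x₃0)) = 0
      rw [hgF0]; simp
    have e2 : a.2.2 - gGm (a.2.1, a.1.2) = 0 := by
      show gGm (0, x₃0) - gGm (0, x₃0) = 0
      simp
    rw [e1, e2]
    rfl
  -- the open set on which the inverse is smooth
  set W := P.target ∩ P.symm ⁻¹' S with hWdef
  have hWo : IsOpen W := P.isOpen_inter_preimage_symm hSo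
  have hWsub : W ⊆ P.target := inter_subset_left
  have hsymm_a : P.symm (Φ a) = a := P.left_inv haP
  have hWmem : ((0, x₃0), (0 : EuclideanSpace ℝ (Fin l) × EuclideanSpace ℝ (Fin l))) ∈ W := by
    rw [← hΦa]
    exact ⟨hΦaP, by show P.symm (Φ a) ∈ S; rw [hsymm_a]; exact haS⟩
  have hsymmW : ∀ y ∈ W, ContDiffAt ℝ ((⊤ : ℕ∞) : WithTop ℕ∞) P.symm y := by
    intro y hy
    exact P.contDiffAt_symm hy.1 (hFD (P.symm y) hy.2) hΦ.contDiffAt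
  -- the candidate solution map
  set g : EuclideanSpace ℝ (Fin k) × EuclideanSpace ℝ (Fin m) →
      (EuclideanSpace ℝ (Fin k) × EuclideanSpace ℝ (Fin m)) ×
      (EuclideanSpace ℝ (Fin l) × EuclideanSpace ℝ (Fin l)) :=
    fun z => P.symm (z, 0) with hgdef
  set σ : EuclideanSpace ℝ (Fin k) × EuclideanSpace ℝ (Fin m) →
      EuclideanSpace ℝ (Fin l) × EuclideanSpace ℝ (Fin l) := fun z => (g z).2 with hσdef
  -- product neighborhoods inside the source
  obtain ⟨U₁, V, hU₁o, hVo, hU₁mem, hVmem, hUVsub⟩ :=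
    isOpen_prod_iff.mp P.open_source (0, x₃0) (0, gGm (0, x₃0)) haP
  set U := (U₁ ∩ {z | (z, (0 : EuclideanSpace ℝ (Fin l) × EuclideanSpace ℝ (Fin l))) ∈ W}) ∩
      g ⁻¹' (U₁ ×ˢ V) with hUdef
  have hcontg : ∀ z, (z, (0 : EuclideanSpace ℝ (Fin l) × EuclideanSpace ℝ (Fin l))) ∈ W →
      ContinuousAt g z := by
    intro z hz
    have hpair : ContinuousAt (fun z' : EuclideanSpace ℝ (Fin k) × EuclideanSpace ℝ (Fin m) =>
        (z', (0 : EuclideanSpace ℝ (Fin l) × EuclideanSpace ℝ (Fin l)))) z :=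
      ContinuousAt.prodMk continuousAt_id continuousAt_const
    exact ContinuousAt.comp (x := z) ((hsymmW _ hz).continuousAt) hpair
  have hW2o : IsOpen {z : EuclideanSpace ℝ (Fin k) × EuclideanSpace ℝ (Fin m) |
      (z, (0 : EuclideanSpace ℝ (Fin l) × EuclideanSpace ℝ (Fin l))) ∈ W} :=
    hWo.preimage (continuous_id.prodMk continuous_const)
  have hUo : IsOpen U := by
    rw [isOpen_iff_mem_nhds]
    intro z hz
    exact Filter.inter_mem
      (Filter.inter_mem (hU₁o.mem_nhds hz.1.1) (hW2o.mem_nhds hz.1.2))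
      ((hcontg z hz.1.2).preimage_mem_nhds ((hU₁o.prod hVo).mem_nhds hz.2))
  have hga : g (0, x₃0) = a := by
    show P.symm ((0, x₃0), 0) = a
    rw [← hΦa]; exact hsymm_a
  have hz0U : ((0 : EuclideanSpace ℝ (Fin k)), x₃0) ∈ U := by
    refine ⟨⟨hU₁mem, hWmem⟩, ?_⟩
    show g (0, x₃0) ∈ U₁ ×ˢ V
    rw [hga]
    exact ⟨hU₁mem, hVmem⟩
  refine ⟨U, hUo, hz0U, V, hVo, hVmem, σ, ?_, ?_⟩
  · -- smoothness of σ on U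
    intro z hz
    have hpair : ContDiffAt ℝ ((⊤ : ℕ∞) : WithTop ℕ∞)
        (fun z' : EuclideanSpace ℝ (Fin k) × EuclideanSpace ℝ (Fin m) =>
          (z', (0 : EuclideanSpace ℝ (Fin l) × EuclideanSpace ℝ (Fin l)))) z :=
      contDiffAt_id.prodMk contDiffAt_const
    have hg' : ContDiffAt ℝ ((⊤ : ℕ∞) : WithTop ℕ∞) g z :=
      ContDiffAt.comp (x := z) (hsymmW _ hz.1.2) hpair
    exact (ContDiffAt.comp (x := z) contDiffAt_snd hg').contDiffWithinAt
  · intro z hz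
    have hzt : (z, (0 : EuclideanSpace ℝ (Fin l) × EuclideanSpace ℝ (Fin l))) ∈ P.target :=
      hz.1.2.1
    have hr : Φ (g z) = (z, 0) := P.right_inv hzt
    have hfst : (g z).1 = z := congrArg Prod.fst hr
    have hgeq : g z = (z, σ z) := Prod.ext hfst rfl
    have hσV : σ z ∈ V := by
      have h : g z ∈ U₁ ×ˢ V := hz.2
      rw [hgeq] at h
      exact h.2
    have hr' : Φ (z, σ z) = (z, 0) := by rw [← hgeq]; exact hr
    have e1 : (σ z).1 - gFm (z.1, (σ z).2) = 0 := congrArg (fun w => w.2.1) hr'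
    have e2 : (σ z).2 - gGm ((σ z).1, z.2) = 0 := congrArg (fun w => w.2.2) hr'
    refine ⟨hσV, sub_eq_zero.mp e1, sub_eq_zero.mp e2, ?_⟩
    rintro w hwV ⟨hw1, hw2⟩
    have hw1' : w.1 - gFm (z.1, w.2) = 0 := sub_eq_zero.mpr hw1
    have hw2' : w.2 - gGm (w.1, z.2) = 0 := sub_eq_zero.mpr hw2
    have hΦw : Φ (z, w) = (z, 0) := by
      show (z, (w.1 - gFm (z.1, w.2), w.2 - gGm (w.1, z.2))) = (z, 0)
      rw [hw1', hw2']
      rfl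
    have hsrcw : (z, w) ∈ P.source := hUVsub ⟨hz.1.1, hwV⟩
    have hsrcs : (z, σ z) ∈ P.source := hUVsub (by rw [← hgeq]; exact (hz.2 : g z ∈ U₁ ×ˢ V))
    have hinjP := P.injOn hsrcw hsrcs (by show Φ (z, w) = Φ (z, σ z); rw [hΦw, hr'])
    exact congrArg Prod.snd hinjP
end
end

section
/- Let E₁, E₂, E₃ be Euclidean spaces ℝ^k, ℝ^l, ℝ^m, and let F : E₁ × E₂ → ℝ and G : E₂ × E₃ → ℝ be smooth functions with ∇₂F(0, x₂) = 0 for all x₂ and ∇₂G(0, x₃) = 0 for all x₃; set ψ(x₃) := ∇₁G(0, x₃). Then for every x₃⁰ ∈ E₃ there exist an open neighborhood N_V of (0, ψ(x₃⁰)) in E₁ × E₂ and an open neighborhood N_W of (0, x₃⁰) in E₂ × E₃ such that, defining the relations V := {((p₁, ∇₁F(p₁,x₂)), (∇₂F(p₁,x₂), x₂)) : (p₁,x₂) ∈ N_V} ⊆ (E₁ × E₁) × (E₂ × E₂) and W := {((p₂, ∇₁G(p₂,x₃)), (∇₂G(p₂,x₃), x₃)) : (p₂,x₃) ∈ N_W}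 ⊆ (E₂ × E₂) × (E₃ × E₃), the composition W ∘ V is monic: for every pair (a, c) with a ∈ E₁ × E₁ and c ∈ E₃ × E₃ belonging to the composed relation, there is exactly one b ∈ E₂ × E₂ with (a,b) ∈ V and (b,c) ∈ W. -/
open ContinuousLinearMap Metric

section Helpers

variable {E F : Type*} [NormedAddCommGroup E] [InnerProductSpace ℝ E]
  [NormedAddCommGroup F] [InnerProductSpace ℝ F]

/-- Gradient of `f` in its second variable, as a function of both variables. -/
noncomputable def gradSnd (f : E × F → ℝ) [CompleteSpace F] : E × F → F :=
  fun z => gradient (fun y => f (z.1, y)) z.2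

/-- Gradient of `f` in its first variable, as a function of both variables. -/
noncomputable def gradFst (f : E × F → ℝ) [CompleteSpace E] : E × F → E :=
  fun z => gradient (fun p => f (p, z.2)) z.1

theorem gradSnd_contDiff (f : E × F → ℝ) [CompleteSpace F] (hf : ContDiff ℝ (⊤ : ℕ∞) f) :
    ContDiff ℝ (⊤ : ℕ∞) (gradSnd f) := by
  have heq : gradSnd f =
      fun z => (InnerProductSpace.toDual ℝ F).symm ((fderiv ℝ f z).comp (inr ℝ E F)) := by
    funext z
    unfold gradSnd gradient
    congr 1
    exact (((hf.differentiable (by norm_num) z).hasFDerivAt.comp z.2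
      (hasFDerivAt_prodMk_right z.1 z.2))).fderiv
  rw [heq]
  exact (InnerProductSpace.toDual ℝ F).symm.contDiff.comp
    ((hf.fderiv_right (by norm_num)).clm_comp contDiff_const)

theorem gradFst_contDiff (f : E × F → ℝ) [CompleteSpace E] (hf : ContDiff ℝ (⊤ : ℕ∞) f) :
    ContDiff ℝ (⊤ : ℕ∞) (gradFst f) := by
  have : gradFst f = (gradSnd (fun u : F × E => f (u.2, u.1))) ∘ (fun z : E × F => (z.2, z.1)) :=
    rfl
  rw [this]
  exact (gradSnd_contDiff _ (hf.comp (contDiff_snd.prodMk contDiff_fst))).comp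
    (contDiff_snd.prodMk contDiff_fst)

end Helpers

/-- Monicity of composition of symplectic micromorphisms in local coordinates: for the
relations `V`, `W` generated by local generating functions `F`, `G` (with the zero section
critical), each point of the composed relation `W ∘ V` comes from a unique intermediate
point. -/
theorem composition_is_monic (k l m : ℕ)
    (F : EuclideanSpace ℝ (Fin k) × EuclideanSpace ℝ (Fin l) → ℝ)
    (G : EuclideanSpace ℝ (Fin l) × EuclideanSpace ℝ (Fin m) → ℝ)
    (hF : ContDiff ℝ (⊤ : ℕ∞) F) (hG : ContDiff ℝ (⊤ : ℕ∞) G)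
    (hFcrit : ∀ x₂ : EuclideanSpace ℝ (Fin l),
      gradient (fun y => F (0, y)) x₂ = 0)
    (hGcrit : ∀ x₃ : EuclideanSpace ℝ (Fin m),
      gradient (fun y => G (0, y)) x₃ = 0) :
    ∀ x₃0 : EuclideanSpace ℝ (Fin m),
      ∃ NV : Set (EuclideanSpace ℝ (Fin k) × EuclideanSpace ℝ (Fin l)),
        IsOpen NV ∧ (0, gradient (fun p₂ => G (p₂, x₃0)) 0) ∈ NV ∧
      ∃ NW : Set (EuclideanSpace ℝ (Fin l) × EuclideanSpace ℝ (Fin m)),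
        IsOpen NW ∧ (0, x₃0) ∈ NW ∧
      ∀ Vrel : Set ((EuclideanSpace ℝ (Fin k) × EuclideanSpace ℝ (Fin k)) ×
                    (EuclideanSpace ℝ (Fin l) × EuclideanSpace ℝ (Fin l))),
        Vrel = (fun z : EuclideanSpace ℝ (Fin k) × EuclideanSpace ℝ (Fin l) =>
            ((z.1, gradient (fun p => F (p, z.2)) z.1),
             (gradient (fun y => F (z.1, y)) z.2, z.2))) '' NV →
      ∀ Wrel : Set ((EuclideanSpace ℝ (Fin l) × EuclideanSpace ℝ (Fin l)) ×
                    (EuclideanSpace ℝ (Fin m) × EuclideanSpace ℝ (Fin m))),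
        Wrel = (fun z : EuclideanSpace ℝ (Fin l) × EuclideanSpace ℝ (Fin m) =>
            ((z.1, gradient (fun p => G (p, z.2)) z.1),
             (gradient (fun y => G (z.1, y)) z.2, z.2))) '' NW →
      ∀ (a : EuclideanSpace ℝ (Fin k) × EuclideanSpace ℝ (Fin k))
        (c : EuclideanSpace ℝ (Fin m) × EuclideanSpace ℝ (Fin m)),
        (∃ b : EuclideanSpace ℝ (Fin l) × EuclideanSpace ℝ (Fin l),
          (a, b) ∈ Vrel ∧ (b, c) ∈ Wrel) →
        ∃! b : EuclideanSpace ℝ (Fin l) × EuclideanSpace ℝ (Fin l),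
          (a, b) ∈ Vrel ∧ (b, c) ∈ Wrel := by
  intro x₃0
  set Φ := gradSnd F with hΦdef
  set Γ := gradFst G with hΓdef
  have hΦ : ContDiff ℝ (⊤ : ℕ∞) Φ := gradSnd_contDiff F hF
  have hΓ : ContDiff ℝ (⊤ : ℕ∞) Γ := gradFst_contDiff G hG
  set ψ := Γ (0, x₃0) with hψdef
  set A := fun z : EuclideanSpace ℝ (Fin k) × EuclideanSpace ℝ (Fin l) =>
    (fderiv ℝ Φ z).comp (inr ℝ _ _) with hAdef
  set B := fun w : EuclideanSpace ℝ (Fin l) × EuclideanSpace ℝ (Fin m) =>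
    (fderiv ℝ Γ w).comp (inl ℝ _ _) with hBdef
  have hAslice : ∀ p y, HasFDerivAt (fun y' => Φ (p, y')) (A (p, y)) y := fun p y =>
    (hΦ.differentiable (by norm_num) (p, y)).hasFDerivAt.comp y (hasFDerivAt_prodMk_right p y)
  have hBslice : ∀ p x, HasFDerivAt (fun p' => Γ (p', x)) (B (p, x)) p := fun p x =>
    HasFDerivAt.comp p (g := Γ) (f := fun p' => (p', x))
      (hΓ.differentiable (by norm_num) (p, x)).hasFDerivAt (hasFDerivAt_prodMk_left (𝕜 := ℝ) p x)
  have hAcont : Continuous A :=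
    (hΦ.continuous_fderiv (by norm_num)).clm_comp continuous_const
  have hBcont : Continuous B :=
    (hΓ.continuous_fderiv (by norm_num)).clm_comp continuous_const
  have hA0 : A (0, ψ) = 0 := by
    have h1 : HasFDerivAt (fun y' => Φ ((0 : EuclideanSpace ℝ (Fin k)), y')) (A (0, ψ)) ψ :=
      hAslice 0 ψ
    have h2 : (fun y' => Φ ((0 : EuclideanSpace ℝ (Fin k)), y')) =
        fun _ => (0 : EuclideanSpace ℝ (Fin l)) := by
      funext y'
      exact hFcrit y'
    rw [h2] at h1
    exact h1.unique (hasFDerivAt_const 0 ψ)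
  set C : ℝ := ‖B (0, x₃0)‖ + 1 with hCdef
  have hC1 : (1 : ℝ) ≤ C := le_add_of_nonneg_left (norm_nonneg _)
  have hC0 : (0 : ℝ) < C := lt_of_lt_of_le one_pos hC1
  set ε : ℝ := 1 / (2 * C) with hεdef
  have hε0 : (0 : ℝ) < ε := by positivity
  have hεC : ε * C = 1 / 2 := by
    field_simp [hεdef]
    rw [hεdef]; field_simp
  have hSA : IsOpen {z : EuclideanSpace ℝ (Fin k) × EuclideanSpace ℝ (Fin l) | ‖A z‖ < ε} :=
    isOpen_lt (hAcont.norm) continuous_const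
  have hSB : IsOpen {w : EuclideanSpace ℝ (Fin l) × EuclideanSpace ℝ (Fin m) | ‖B w‖ < C} :=
    isOpen_lt (hBcont.norm) continuous_const
  have hmemA : ((0 : EuclideanSpace ℝ (Fin k)), ψ) ∈
      {z : EuclideanSpace ℝ (Fin k) × EuclideanSpace ℝ (Fin l) | ‖A z‖ < ε} := by
    show ‖A (0, ψ)‖ < ε
    rw [hA0, norm_zero]
    exact hε0
  have hmemB : ((0 : EuclideanSpace ℝ (Fin l)), x₃0) ∈
      {w : EuclideanSpace ℝ (Fin l) × EuclideanSpace ℝ (Fin m) | ‖B w‖ < C} := by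
    show ‖B (0, x₃0)‖ < C
    rw [hCdef]
    linarith
  obtain ⟨δ₁, hδ₁, hball₁⟩ := Metric.isOpen_iff.1 hSA _ hmemA
  obtain ⟨δ₂, hδ₂, hball₂⟩ := Metric.isOpen_iff.1 hSB _ hmemB
  have hcenter : ((0 : EuclideanSpace ℝ (Fin k)), gradient (fun p₂ => G (p₂, x₃0)) 0) =
      ((0 : EuclideanSpace ℝ (Fin k)), ψ) := rfl
  refine ⟨Metric.ball ((0 : EuclideanSpace ℝ (Fin k)), ψ) δ₁, isOpen_ball, ?_,
    Metric.ball ((0 : EuclideanSpace ℝ (Fin l)), x₃0) δ₂, isOpen_ball, mem_ball_self hδ₂, ?_⟩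
  · rw [hcenter]; exact mem_ball_self hδ₁
  intro Vrel hVdef Wrel hWdef a c hex
  obtain ⟨b₀, hb₀⟩ := hex
  have extract : ∀ b : EuclideanSpace ℝ (Fin l) × EuclideanSpace ℝ (Fin l),
      (a, b) ∈ Vrel ∧ (b, c) ∈ Wrel →
      (a.1, b.2) ∈ Metric.ball ((0 : EuclideanSpace ℝ (Fin k)), ψ) δ₁ ∧
      (b.1, c.2) ∈ Metric.ball ((0 : EuclideanSpace ℝ (Fin l)), x₃0) δ₂ ∧
      b.1 = Φ (a.1, b.2) ∧ b.2 = Γ (b.1, c.2) := by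
    rintro b ⟨hbV, hbW⟩
    rw [hVdef] at hbV
    rw [hWdef] at hbW
    obtain ⟨z, hz, hzeq⟩ := hbV
    obtain ⟨w, hw, hweq⟩ := hbW
    rw [Prod.ext_iff] at hzeq hweq
    obtain ⟨hza, hzb⟩ := hzeq
    obtain ⟨hwb, hwc⟩ := hweq
    rw [Prod.ext_iff] at hza hzb hwb hwc
    have hz1 : z.1 = a.1 := hza.1
    have hz3 : Φ z = b.1 := hzb.1
    have hz4 : z.2 = b.2 := hzb.2
    have hw1 : w.1 = b.1 := hwb.1
    have hw2 : Γ w = b.2 := hwb.2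
    have hw4 : w.2 = c.2 := hwc.2
    have hzz : z = (a.1, b.2) := Prod.ext hz1 hz4
    have hww : w = (b.1, c.2) := Prod.ext hw1 hw4
    rw [hzz] at hz hz3
    rw [hww] at hw hw2
    exact ⟨hz, hw, hz3.symm, hw2.symm⟩
  have unique : ∀ b b' : EuclideanSpace ℝ (Fin l) × EuclideanSpace ℝ (Fin l),
      ((a, b) ∈ Vrel ∧ (b, c) ∈ Wrel) → ((a, b') ∈ Vrel ∧ (b', c) ∈ Wrel) → b = b' := by
    intro b b' hb hb'
    obtain ⟨hbNV, hbNW, hb1, hb2⟩ := extract b hb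
    obtain ⟨hbNV', hbNW', hb1', hb2'⟩ := extract b' hb'
    simp only [mem_ball, Prod.dist_eq, max_lt_iff, sup_lt_iff] at hbNV hbNW hbNV' hbNW'
    have memNV : ∀ y, y ∈ Metric.ball ψ δ₁ ↔
        ((a.1, y) : EuclideanSpace ℝ (Fin k) × EuclideanSpace ℝ (Fin l)) ∈
          Metric.ball ((0 : EuclideanSpace ℝ (Fin k)), ψ) δ₁ := by
      intro y
      simp only [mem_ball, Prod.dist_eq, max_lt_iff, sup_lt_iff]
      exact ⟨fun h => ⟨hbNV.1, h⟩, fun h => h.2⟩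
    have memNW : ∀ p, p ∈ Metric.ball (0 : EuclideanSpace ℝ (Fin l)) δ₂ ↔
        ((p, c.2) : EuclideanSpace ℝ (Fin l) × EuclideanSpace ℝ (Fin m)) ∈
          Metric.ball ((0 : EuclideanSpace ℝ (Fin l)), x₃0) δ₂ := by
      intro p
      simp only [mem_ball, Prod.dist_eq, max_lt_iff, sup_lt_iff]
      exact ⟨fun h => ⟨h, hbNW.2⟩, fun h => h.1⟩
    have hbNV2 : b.2 ∈ Metric.ball ψ δ₁ := mem_ball.2 hbNV.2
    have hbNV2' : b'.2 ∈ Metric.ball ψ δ₁ := mem_ball.2 hbNV'.2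
    have hbNW1 : b.1 ∈ Metric.ball (0 : EuclideanSpace ℝ (Fin l)) δ₂ := mem_ball.2 hbNW.1
    have hbNW1' : b'.1 ∈ Metric.ball (0 : EuclideanSpace ℝ (Fin l)) δ₂ := mem_ball.2 hbNW'.1
    have key1 : ‖Φ (a.1, b.2) - Φ (a.1, b'.2)‖ ≤ ε * ‖b.2 - b'.2‖ :=
      Convex.norm_image_sub_le_of_norm_hasFDerivWithin_le
        (f := fun y => Φ (a.1, y)) (f' := fun y => A (a.1, y)) (s := Metric.ball ψ δ₁)
        (fun y _ => (hAslice a.1 y).hasFDerivWithinAt)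
        (fun y hy => le_of_lt (hball₁ ((memNV y).1 hy)))
        (convex_ball ψ δ₁) hbNV2' hbNV2
    have key2 : ‖Γ (b.1, c.2) - Γ (b'.1, c.2)‖ ≤ C * ‖b.1 - b'.1‖ :=
      Convex.norm_image_sub_le_of_norm_hasFDerivWithin_le
        (f := fun p => Γ (p, c.2)) (f' := fun p => B (p, c.2))
        (s := Metric.ball (0 : EuclideanSpace ℝ (Fin l)) δ₂)
        (fun p _ => (hBslice p c.2).hasFDerivWithinAt)
        (fun p hp => le_of_lt (hball₂ ((memNW p).1 hp)))
        (convex_ball _ δ₂) hbNW1' hbNW1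
    have hchain : ‖b.1 - b'.1‖ ≤ (1 / 2) * ‖b.1 - b'.1‖ := by
      calc ‖b.1 - b'.1‖ = ‖Φ (a.1, b.2) - Φ (a.1, b'.2)‖ := by rw [← hb1, ← hb1']
        _ ≤ ε * ‖b.2 - b'.2‖ := key1
        _ = ε * ‖Γ (b.1, c.2) - Γ (b'.1, c.2)‖ := by rw [← hb2, ← hb2']
        _ ≤ ε * (C * ‖b.1 - b'.1‖) := mul_le_mul_of_nonneg_left key2 (le_of_lt hε0)
        _ = (1 / 2) * ‖b.1 - b'.1‖ := by rw [← mul_assoc, hεC]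
    have h1eq : b.1 = b'.1 := by
      have hle : ‖b.1 - b'.1‖ ≤ 0 := by linarith
      have heq := le_antisymm hle (norm_nonneg _)
      rw [norm_eq_zero, sub_eq_zero] at heq
      exact heq
    have h2eq : b.2 = b'.2 := by rw [hb2, hb2', h1eq]
    exact Prod.ext h1eq h2eq
  exact ⟨b₀, hb₀, fun b hb => unique b b₀ hb hb₀⟩
end

section
/- Let E₁, E₂, E₃ be Euclidean spaces ℝ^k, ℝ^l, ℝ^m, F : E₁ × E₂ → ℝ and G : E₂ × E₃ → ℝ smooth, U ⊆ E₁ × E₃ open, and let p̄₂ : U → E₂ and x̄₂ : U → E₂ be smooth maps satisfying p̄₂(p₁,x₃) = ∇₂F(p₁, x̄₂(p₁,x₃)) and x̄₂(p₁,x₃) = ∇₁G(p̄₂(p₁,x₃), x₃) for all (p₁,x₃) ∈ U. Define (G⋆F)(p₁,x₃) := F(p₁, x̄₂(p₁,x₃)) + G(p̄₂(p₁,x₃), x₃) − ⟨p̄₂(p₁,x₃), x̄₂(p₁,x₃)⟩. Then for all (p₁,x₃) ∈ U: ∇₁(G⋆F)(p₁,x₃) = ∇₁F(p₁, x̄₂(p₁,x₃))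 and ∇₂(G⋆F)(p₁,x₃) = ∇₂G(p̄₂(p₁,x₃), x₃). -/
open RealInnerProductSpace

open ContinuousLinearMap in
lemma key {E E₂ E₃ : Type*}
    [NormedAddCommGroup E] [InnerProductSpace ℝ E] [CompleteSpace E]
    [NormedAddCommGroup E₂] [InnerProductSpace ℝ E₂] [CompleteSpace E₂]
    [NormedAddCommGroup E₃] [NormedSpace ℝ E₃]
    (F : E × E₂ → ℝ) (G : E₂ × E₃ → ℝ)
    (hF : Differentiable ℝ F) (hG : Differentiable ℝ G)
    (a : E) (b : E₃) (X P : E → E₂) (X' P' : E →L[ℝ] E₂)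
    (hX : HasFDerivAt X X' a) (hP : HasFDerivAt P P' a)
    (h1 : P a = gradient (fun y => F (a, y)) (X a))
    (h2 : X a = gradient (fun p => G (p, b)) (P a)) :
    gradient (fun t => F (t, X t) + G (P t, b) - ⟪P t, X t⟫) a
      = gradient (fun t => F (t, X a)) a := by
  set DF := fderiv ℝ F (a, X a) with hDF
  set DG := fderiv ℝ G (P a, b) with hDG
  -- partial derivatives as gradients
  have hpF : HasFDerivAt (fun y => F (a, y)) (DF.comp (inr ℝ E E₂)) (X a) :=
    (hF (a, X a)).hasFDerivAt.comp (X a) (hasFDerivAt_prodMk_right a (X a))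
  have hpG : HasFDerivAt (fun p => G (p, b)) (DG.comp (inl ℝ E₂ E₃)) (P a) :=
    (hG (P a, b)).hasFDerivAt.comp (P a) (hasFDerivAt_prodMk_left (P a) b)
  have key1 : ∀ w : E₂, DF (0, w) = ⟪P a, w⟫ := by
    intro w
    have hf := hpF.fderiv
    have h' : (⟪P a, w⟫ : ℝ) = fderiv ℝ (fun y => F (a, y)) (X a) w := by
      rw [h1, show gradient (fun y => F (a, y)) (X a) = (InnerProductSpace.toDual ℝ E₂).symm
        (fderiv ℝ (fun y => F (a, y)) (X a)) from rfl, InnerProductSpace.toDual_symm_apply]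
    rw [h', hf]
    simp
  have key2 : ∀ u : E₂, DG (u, 0) = ⟪X a, u⟫ := by
    intro u
    have hf := hpG.fderiv
    have h' : (⟪X a, u⟫ : ℝ) = fderiv ℝ (fun p => G (p, b)) (P a) u := by
      rw [h2, show gradient (fun p => G (p, b)) (P a) = (InnerProductSpace.toDual ℝ E₂).symm
        (fderiv ℝ (fun p => G (p, b)) (P a)) from rfl, InnerProductSpace.toDual_symm_apply]
    rw [h', hf]
    simp
  have hL : HasFDerivAt (fun t => F (t, X t) + G (P t, b) - ⟪P t, X t⟫)
      ((DF.comp ((ContinuousLinearMap.id ℝ E).prod X')).comp (ContinuousLinearMap.id ℝ E)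
        + DG.comp (P'.prod 0)
        - (fderivInnerCLM ℝ (P a, X a)).comp (P'.prod X')) a := by
    have h1' : HasFDerivAt (fun t => F (t, X t))
        ((DF.comp ((ContinuousLinearMap.id ℝ E).prod X')).comp (ContinuousLinearMap.id ℝ E)) a := by
      have h0 := (hF (a, X a)).hasFDerivAt.comp a ((hasFDerivAt_id a).prodMk hX)
      have h00 := h0.comp a (hasFDerivAt_id a)
      exact h00
    have h2' : HasFDerivAt (fun t => G (P t, b)) (DG.comp (P'.prod 0)) a :=
      (hG (P a, b)).hasFDerivAt.comp a (hP.prodMk (hasFDerivAt_const b a))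
    have h3' : HasFDerivAt (fun t => ⟪P t, X t⟫)
        ((fderivInnerCLM ℝ (P a, X a)).comp (P'.prod X')) a := hP.inner ℝ hX
    exact (h1'.add h2').sub h3'
  have hR : HasFDerivAt (fun t => F (t, X a)) (DF.comp (inl ℝ E E₂)) a :=
    (hF (a, X a)).hasFDerivAt.comp a (hasFDerivAt_prodMk_left a (X a))
  have heqL : ((DF.comp ((ContinuousLinearMap.id ℝ E).prod X')).comp (ContinuousLinearMap.id ℝ E)
        + DG.comp (P'.prod 0)
        - (fderivInnerCLM ℝ (P a, X a)).comp (P'.prod X')) = DF.comp (inl ℝ E E₂) := by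
    ext v
    have hsplit : DF (v, X' v) = DF (v, 0) + DF (0, X' v) := by
      rw [← map_add]; norm_num
    simp only [ContinuousLinearMap.sub_apply, ContinuousLinearMap.add_apply,
      ContinuousLinearMap.comp_apply, ContinuousLinearMap.prod_apply,
      ContinuousLinearMap.coe_id', id_eq, ContinuousLinearMap.zero_apply,
      ContinuousLinearMap.inl_apply, fderivInnerCLM_apply]
    rw [hsplit, key1 (X' v), key2 (P' v)]
    rw [real_inner_comm (X a) (P' v)]
    ring
  rw [show gradient (fun t => F (t, X t) + G (P t, b) - ⟪P t, X t⟫) a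
      = (InnerProductSpace.toDual ℝ E).symm
        (fderiv ℝ (fun t => F (t, X t) + G (P t, b) - ⟪P t, X t⟫) a) from rfl,
    show gradient (fun t => F (t, X a)) a
      = (InnerProductSpace.toDual ℝ E).symm (fderiv ℝ (fun t => F (t, X a)) a) from rfl,
    hL.fderiv, hR.fderiv, heqL]

/-- Gradient identities for the composition `G⋆F` of local generating functions:
if `p̄₂ = ∇₂F(p₁, x̄₂)` and `x̄₂ = ∇₁G(p̄₂, x₃)` on an open set `U`, then the function
`(G⋆F)(p₁,x₃) = F(p₁,x̄₂) + G(p̄₂,x₃) − ⟨p̄₂,x̄₂⟩` satisfies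
`∇₁(G⋆F)(p₁,x₃) = ∇₁F(p₁,x̄₂)` and `∇₂(G⋆F)(p₁,x₃) = ∇₂G(p̄₂,x₃)`. -/
theorem star_generating_function_gradients (k l m : ℕ)
    (F : EuclideanSpace ℝ (Fin k) × EuclideanSpace ℝ (Fin l) → ℝ)
    (G : EuclideanSpace ℝ (Fin l) × EuclideanSpace ℝ (Fin m) → ℝ)
    (hF : ContDiff ℝ (⊤ : ℕ∞) F) (hG : ContDiff ℝ (⊤ : ℕ∞) G)
    (U : Set (EuclideanSpace ℝ (Fin k) × EuclideanSpace ℝ (Fin m)))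
    (hU : IsOpen U)
    (pbar xbar : EuclideanSpace ℝ (Fin k) × EuclideanSpace ℝ (Fin m) →
      EuclideanSpace ℝ (Fin l))
    (hpbar : ContDiffOn ℝ (⊤ : ℕ∞) pbar U)
    (hxbar : ContDiffOn ℝ (⊤ : ℕ∞) xbar U)
    (heq1 : ∀ z ∈ U, pbar z = gradient (fun y => F (z.1, y)) (xbar z))
    (heq2 : ∀ z ∈ U, xbar z = gradient (fun p => G (p, z.2)) (pbar z)) :
    ∀ z ∈ U,
      gradient (fun p₁ => F (p₁, xbar (p₁, z.2)) + G (pbar (p₁, z.2), z.2)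
          - ⟪pbar (p₁, z.2), xbar (p₁, z.2)⟫) z.1
        = gradient (fun p₁ => F (p₁, xbar z)) z.1 ∧
      gradient (fun x₃ => F (z.1, xbar (z.1, x₃)) + G (pbar (z.1, x₃), x₃)
          - ⟪pbar (z.1, x₃), xbar (z.1, x₃)⟫) z.2
        = gradient (fun x₃ => G (pbar z, x₃)) z.2 := by
  rintro ⟨a, b⟩ hz
  have hxd : HasFDerivAt xbar (fderiv ℝ xbar (a, b)) (a, b) :=
    (((hxbar.contDiffAt (hU.mem_nhds hz)).differentiableAt (by simp))).hasFDerivAt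
  have hpd : HasFDerivAt pbar (fderiv ℝ pbar (a, b)) (a, b) :=
    (((hpbar.contDiffAt (hU.mem_nhds hz)).differentiableAt (by simp))).hasFDerivAt
  constructor
  · have hX : HasFDerivAt (fun t => xbar (t, b))
        ((fderiv ℝ xbar (a, b)).comp (ContinuousLinearMap.inl ℝ _ _)) a :=
      hxd.comp a (hasFDerivAt_prodMk_left a b)
    have hP : HasFDerivAt (fun t => pbar (t, b))
        ((fderiv ℝ pbar (a, b)).comp (ContinuousLinearMap.inl ℝ _ _)) a :=
      hpd.comp a (hasFDerivAt_prodMk_left a b)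
    exact key F G (hF.differentiable (by simp)) (hG.differentiable (by simp)) a b
      (fun t => xbar (t, b)) (fun t => pbar (t, b)) _ _ hX hP (heq1 (a, b) hz) (heq2 (a, b) hz)
  · have hX : HasFDerivAt (fun t => pbar (a, t))
        ((fderiv ℝ pbar (a, b)).comp (ContinuousLinearMap.inr ℝ _ _)) b :=
      hpd.comp b (hasFDerivAt_prodMk_right a b)
    have hP : HasFDerivAt (fun t => xbar (a, t))
        ((fderiv ℝ xbar (a, b)).comp (ContinuousLinearMap.inr ℝ _ _)) b :=
      hxd.comp b (hasFDerivAt_prodMk_right a b)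
    have hfun : (fun x₃ => F (a, xbar (a, x₃)) + G (pbar (a, x₃), x₃)
          - ⟪pbar (a, x₃), xbar (a, x₃)⟫)
        = (fun t => G ((fun t => pbar (a, t)) t, t) + F (a, (fun t => xbar (a, t)) t)
          - ⟪xbar (a, t), pbar (a, t)⟫) := by
      funext t
      rw [real_inner_comm (pbar (a, t)) (xbar (a, t))]
      ring
    rw [show ((a, b) : EuclideanSpace ℝ (Fin k) × EuclideanSpace ℝ (Fin m)).1 = a from rfl,
      show ((a, b) : EuclideanSpace ℝ (Fin k) × EuclideanSpace ℝ (Fin m)).2 = b from rfl,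
      hfun]
    exact key (fun q => G (q.2, q.1)) (fun q => F (q.2, q.1))
      ((hG.differentiable (by simp)).comp (differentiable_snd.prodMk differentiable_fst))
      ((hF.differentiable (by simp)).comp (differentiable_snd.prodMk differentiable_fst))
      b a (fun t => pbar (a, t)) (fun t => xbar (a, t)) _ _ hX hP
      (heq2 (a, b) hz) (heq1 (a, b) hz)
end
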